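/- There is no subset S of F_p^2 having exactly 2 special directions. -/

import Mathlib

/-- Number of points of `S` on the line through `x` with direction vector `u`. -/
def lineCount (p : ℕ) [Fact p.Prime] (S : Finset (ZMod p × ZMod p))
    (u x : ZMod p × ZMod p) : ℕ :=
  (S.filter fun w => ∃ t : ZMod p, w = x + t • u).card

/-- Direction vectors of the `p+1` directions: `some m` has slope `m`, `none` is vertical. -/
def dirVec (p : ℕ) : Option (ZMod p) → ZMod p × ZMod p
  | none => (0, 1)
  | some m => (1, m)

/-- `S` is equidistributed in the direction of the vector `u`. -/
def Equidistributed (p : ℕ) [Fact p.Prime] (S : Finset (ZMod p × ZMod p))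
    (u : ZMod p × ZMod p) : Prop :=
  ∀ x y : ZMod p × ZMod p, lineCount p S u x = lineCount p S u y

open Classical in
/-- The set of special (non-equidistributed) directions of `S`. -/
noncomputable def specialDirs (p : ℕ) [Fact p.Prime] (S : Finset (ZMod p × ZMod p)) :
    Finset (Option (ZMod p)) :=
  Finset.univ.filter fun d => ¬ Equidistributed p S (dirVec p d)

def lcoord (p : ℕ) : Option (ZMod p) → ZMod p × ZMod p → ZMod p
  | none => fun x => x.1
  | some m => fun x => x.2 - m * x.1

lemma mem_line (p : ℕ) [Fact p.Prime] (d : Option (ZMod p)) (w x : ZMod p × ZMod p) :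
    (∃ t : ZMod p, w = x + t • dirVec p d) ↔ lcoord p d w = lcoord p d x := by
  cases d with
  | none =>
    simp only [dirVec, lcoord, Prod.ext_iff, Prod.smul_mk, Prod.fst_add, Prod.snd_add,
      smul_eq_mul, Prod.smul_fst, Prod.smul_snd]
    constructor
    · rintro ⟨t, h1, h2⟩; simp [h1]
    · intro h; exact ⟨w.2 - x.2, by simp [h], by ring⟩
  | some m =>
    simp only [dirVec, lcoord, Prod.ext_iff, Prod.fst_add, Prod.snd_add,
      smul_eq_mul, Prod.smul_fst, Prod.smul_snd]
    constructor
    · rintro ⟨t, h1, h2⟩; rw [h1, h2]; ring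
    · intro h
      refine ⟨w.1 - x.1, by ring, ?_⟩
      have : w.2 = x.2 + m * (w.1 - x.1) := by linear_combination h
      rw [this]; ring

lemma lineCount_eq (p : ℕ) [Fact p.Prime] (S : Finset (ZMod p × ZMod p))
    (d : Option (ZMod p)) (x : ZMod p × ZMod p) :
    lineCount p S (dirVec p d) x = (S.filter fun w => lcoord p d w = lcoord p d x).card := by
  unfold lineCount
  congr 1
  exact Finset.filter_congr fun w _ => by simpa using mem_line p d w x

lemma joint_surj (p : ℕ) [Fact p.Prime] {d1 d2 : Option (ZMod p)} (h : d1 ≠ d2)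
    (c b : ZMod p) : ∃ x : ZMod p × ZMod p, lcoord p d1 x = c ∧ lcoord p d2 x = b := by
  haveI := Fact.out (p := p.Prime)
  cases d1 with
  | none =>
    cases d2 with
    | none => exact absurd rfl h
    | some m => exact ⟨(c, b + m * c), by simp [lcoord], by simp [lcoord]⟩
  | some m =>
    cases d2 with
    | none => exact ⟨(b, c + m * b), by simp [lcoord], by simp [lcoord]⟩
    | some m' =>
      have hm : m' - m ≠ 0 := sub_ne_zero.2 fun e => h (by rw [e])
      refine ⟨((c - b) / (m' - m), c + m * ((c - b) / (m' - m))), by simp [lcoord], ?_⟩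
      simp only [lcoord]
      field_simp
      ring

lemma joint_inj (p : ℕ) [Fact p.Prime] {d1 d2 : Option (ZMod p)} (h : d1 ≠ d2)
    {w x : ZMod p × ZMod p} (h1 : lcoord p d1 w = lcoord p d1 x)
    (h2 : lcoord p d2 w = lcoord p d2 x) : w = x := by
  cases d1 with
  | none =>
    cases d2 with
    | none => exact absurd rfl h
    | some m =>
      simp only [lcoord] at h1 h2
      exact Prod.ext h1 (by linear_combination h2 + m * h1)
  | some m =>
    cases d2 with
    | none =>
      simp only [lcoord] at h1 h2
      exact Prod.ext h2 (by linear_combination h1 + m * h2)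
    | some m' =>
      have hm : m - m' ≠ 0 := sub_ne_zero.2 fun e => h (by rw [e])
      simp only [lcoord] at h1 h2
      have e1 : w.1 = x.1 := by
        have h3 : (m - m') * w.1 = (m - m') * x.1 := by linear_combination h2 - h1
        exact mul_left_cancel₀ hm h3
      exact Prod.ext e1 (by linear_combination h1 + m * e1)

lemma uniq_dir (p : ℕ) [Fact p.Prime] {w x : ZMod p × ZMod p} (hwx : w ≠ x) :
    ∃! d : Option (ZMod p), lcoord p d w = lcoord p d x := by
  by_cases h1 : w.1 = x.1
  · refine ⟨none, h1, ?_⟩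
    rintro (_ | m) hd
    · rfl
    · simp only [lcoord] at hd
      exact absurd (Prod.ext h1 (by linear_combination hd + m * h1)) hwx
  · have hm : (w.1 - x.1) ≠ 0 := sub_ne_zero.2 h1
    refine ⟨some ((w.2 - x.2) / (w.1 - x.1)), ?_, ?_⟩
    · simp only [lcoord]
      field_simp
      ring
    · rintro (_ | m) hd
      · exact absurd hd h1
      · simp only [lcoord] at hd
        congr 1
        field_simp
        linear_combination -hd

lemma fiber_card (p : ℕ) [Fact p.Prime] (d : Option (ZMod p)) (c : ZMod p) :
    (Finset.univ.filter fun w : ZMod p × ZMod p => lcoord p d w = c).card = p := by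
  haveI := Fact.out (p := p.Prime)
  cases d with
  | none =>
    conv_rhs => rw [← ZMod.card p, ← Finset.card_univ]
    apply Finset.card_bij' (fun w _ => w.2) (fun t _ => ((c, t) : ZMod p × ZMod p))
    · intros; exact Finset.mem_univ _
    · intros; exact Finset.mem_filter.2 ⟨Finset.mem_univ _, by simp [lcoord]⟩
    · intro w hw; simp only [Finset.mem_filter, lcoord] at hw
      exact Prod.ext (Finset.mem_filter.1 hw).2.symm rfl
    · intros; rfl
  | some m =>
    conv_rhs => rw [← ZMod.card p, ← Finset.card_univ]
    apply Finset.card_bij' (fun w _ => w.1) (fun t _ => ((t, c + m * t) : ZMod p × ZMod p))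
    · intros; exact Finset.mem_univ _
    · intros; exact Finset.mem_filter.2 ⟨Finset.mem_univ _, by simp [lcoord]⟩
    · intro w hw; simp only [Finset.mem_filter, lcoord] at hw
      refine Prod.ext rfl ?_
      linear_combination -(Finset.mem_filter.1 hw).2
    · intros; rfl

open Finset

lemma sum_fibers (p : ℕ) [Fact p.Prime] (S : Finset (ZMod p × ZMod p)) (d : Option (ZMod p)) :
    ∑ c : ZMod p, (S.filter fun w => lcoord p d w = c).card = S.card :=
  (Finset.card_eq_sum_card_fiberwise (fun x _ => Finset.mem_univ (lcoord p d x))).symm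

lemma card_dirs (p : ℕ) [Fact p.Prime] :
    Fintype.card (Option (ZMod p)) = p + 1 := by
  haveI := Fact.out (p := p.Prime)
  simp [ZMod.card p]

lemma count_id (p : ℕ) [Fact p.Prime] (S : Finset (ZMod p × ZMod p)) (x : ZMod p × ZMod p) :
    ∑ d : Option (ZMod p), lineCount p S (dirVec p d) x
      = S.card + (if x ∈ S then p else 0) := by
  have key : ∀ w : ZMod p × ZMod p,
      (univ.filter fun d : Option (ZMod p) => lcoord p d w = lcoord p d x).card
        = 1 + (if w = x then p else 0) := by
    intro w
    by_cases hwx : w = x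
    · subst hwx
      rw [if_pos rfl]
      rw [Finset.filter_true_of_mem (fun _ _ => rfl), Finset.card_univ, card_dirs]
      omega
    · rw [if_neg hwx]
      obtain ⟨d0, hd0, hu⟩ := uniq_dir p hwx
      rw [Finset.card_eq_one]
      exact ⟨d0, by
        ext d
        simp only [Finset.mem_filter, Finset.mem_univ, true_and, Finset.mem_singleton]
        exact ⟨fun h => hu d h, fun h => h ▸ hd0⟩⟩
  calc ∑ d : Option (ZMod p), lineCount p S (dirVec p d) x
      = ∑ d : Option (ZMod p), ∑ w ∈ S, if lcoord p d w = lcoord p d x then 1 else 0 := by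
        refine Finset.sum_congr rfl fun d _ => ?_
        rw [lineCount_eq, Finset.card_filter]
    _ = ∑ w ∈ S, (univ.filter fun d : Option (ZMod p) => lcoord p d w = lcoord p d x).card := by
        rw [Finset.sum_comm]
        refine Finset.sum_congr rfl fun w _ => ?_
        rw [Finset.card_filter]
    _ = ∑ w ∈ S, (1 + if w = x then p else 0) := Finset.sum_congr rfl fun w _ => key w
    _ = S.card + (if x ∈ S then p else 0) := by
        rw [Finset.sum_add_distrib, Finset.sum_ite_eq' S x (fun _ => p)]
        simp

lemma equi_mul (p : ℕ) [Fact p.Prime] (S : Finset (ZMod p × ZMod p)) (d : Option (ZMod p))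
    (h : Equidistributed p S (dirVec p d)) (x : ZMod p × ZMod p) :
    p * lineCount p S (dirVec p d) x = S.card := by
  have hfib : ∀ c : ZMod p, (S.filter fun w => lcoord p d w = c).card
      = lineCount p S (dirVec p d) x := by
    intro c
    have hne : (univ.filter fun w : ZMod p × ZMod p => lcoord p d w = c).Nonempty := by
      rw [← Finset.card_pos, fiber_card]
      exact (Fact.out (p := p.Prime)).pos
    obtain ⟨y, hy⟩ := hne
    simp only [Finset.mem_filter] at hy
    rw [← hy.2, ← lineCount_eq]
    exact h y x
  have := sum_fibers p S d
  rw [Finset.sum_congr rfl fun c _ => hfib c, Finset.sum_const, Finset.card_univ,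
    ZMod.card, smul_eq_mul] at this
  exact this

lemma const_equi (p : ℕ) [Fact p.Prime] (S : Finset (ZMod p × ZMod p)) (d : Option (ZMod p))
    (h : ∀ b b' : ZMod p, (S.filter fun w => lcoord p d w = b).card
      = (S.filter fun w => lcoord p d w = b').card) :
    Equidistributed p S (dirVec p d) := by
  intro x y
  rw [lineCount_eq, lineCount_eq]
  exact h _ _

theorem stmt_2 (p : ℕ) [Fact p.Prime] (S : Finset (ZMod p × ZMod p)) :
    (specialDirs p S).card ≠ 2 := by
  intro h2
  have hp := Fact.out (p := p.Prime)
  classical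
  obtain ⟨d1, d2, hne, hset⟩ := Finset.card_eq_two.mp h2
  have hspec : ∀ d, ¬ Equidistributed p S (dirVec p d) ↔ (d = d1 ∨ d = d2) := by
    intro d
    have : d ∈ specialDirs p S ↔ d = d1 ∨ d = d2 := by rw [hset]; simp
    simpa [specialDirs] using this
  have hd1 : ¬ Equidistributed p S (dirVec p d1) := (hspec d1).2 (Or.inl rfl)
  have hd2 : ¬ Equidistributed p S (dirVec p d2) := (hspec d2).2 (Or.inr rfl)
  obtain ⟨d0, hd0⟩ : ∃ d0, Equidistributed p S (dirVec p d0) := by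
    by_contra hc
    push_neg at hc
    have hsub : (univ : Finset (Option (ZMod p))) ⊆ {d1, d2} := fun d _ => by
      rcases (hspec d).1 (hc d) with h | h <;> simp [h]
    have hcard := Finset.card_le_card hsub
    rw [Finset.card_univ, card_dirs, Finset.card_pair hne] at hcard
    have := hp.two_le
    omega
  set k := lineCount p S (dirVec p d0) 0 with hk
  have hSk : S.card = p * k := (equi_mul p S d0 hd0 0).symm
  have hkpos : k ≠ 0 := by
    intro h0
    apply hd1
    have hS0 : S = ∅ := Finset.card_eq_zero.mp (by rw [hSk, h0, mul_zero])
    intro x y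
    simp [lineCount, hS0]
  have hval : ∀ d, Equidistributed p S (dirVec p d) → ∀ x,
      lineCount p S (dirVec p d) x = k := fun d hd x =>
    Nat.eq_of_mul_eq_mul_left hp.pos (by rw [equi_mul p S d hd x, hSk])
  set A : ZMod p → ℕ := fun c => (S.filter fun w => lcoord p d1 w = c).card with hA
  set B : ZMod p → ℕ := fun b => (S.filter fun w => lcoord p d2 w = b).card with hB
  -- pointwise identity
  have hAB : ∀ x, A (lcoord p d1 x) + B (lcoord p d2 x) = k + (if x ∈ S then p else 0) := by
    intro x
    have hsum := count_id p S x
    have hsub : ({d1, d2} : Finset (Option (ZMod p))) ⊆ univ := subset_univ _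
    rw [← Finset.sum_sdiff hsub] at hsum
    have hrest : ∑ d ∈ univ \ {d1, d2}, lineCount p S (dirVec p d) x = (p - 1) * k := by
      rw [Finset.sum_congr rfl (fun d hd => ?_), Finset.sum_const, smul_eq_mul]
      · congr 1
        rw [Finset.card_sdiff_of_subset hsub, Finset.card_univ, card_dirs, Finset.card_pair hne]
        omega
      · simp only [Finset.mem_sdiff, Finset.mem_insert, Finset.mem_singleton] at hd
        refine hval d ?_ x
        by_contra hcd
        rcases (hspec d).1 hcd with h | h
        · exact hd.2 (Or.inl h)
        · exact hd.2 (Or.inr h)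
    rw [hrest, Finset.sum_pair hne, lineCount_eq, lineCount_eq, hSk, Nat.sub_one_mul] at hsum
    have hkM : k ≤ p * k := Nat.le_mul_of_pos_left k hp.pos
    show (S.filter fun w => lcoord p d1 w = lcoord p d1 x).card
      + (S.filter fun w => lcoord p d2 w = lcoord p d2 x).card = _
    by_cases hx : x ∈ S <;> simp only [hx, if_true, if_false] at hsum ⊢ <;>
      generalize hM : p * k = M at hsum hkM <;> omega
  have hmem : ∀ x, x ∈ S ↔ A (lcoord p d1 x) + B (lcoord p d2 x) = k + p := by
    intro x
    have := hAB x
    have hp1 : 0 < p := hp.pos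
    by_cases hx : x ∈ S <;> simp only [hx, if_true, if_false, true_iff, false_iff] at this ⊢ <;>
      omega
  -- fiber identities
  have hi : ∀ c, A c = (univ.filter fun b => A c + B b = k + p).card := by
    intro c
    show (S.filter fun w => lcoord p d1 w = c).card = _
    apply Finset.card_bij (fun x _ => lcoord p d2 x)
    · intro x hx
      simp only [mem_filter] at hx ⊢
      refine ⟨mem_univ _, ?_⟩
      rw [← hx.2]
      exact (hmem x).1 hx.1
    · intro x hx y hy hxy
      simp only [mem_filter] at hx hy
      exact joint_inj p hne (hx.2.trans hy.2.symm) hxy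
    · intro b hb
      simp only [mem_filter] at hb
      obtain ⟨x, hx1, hx2⟩ := joint_surj p hne c b
      exact ⟨x, mem_filter.2 ⟨(hmem x).2 (by rw [hx1, hx2]; exact hb.2), hx1⟩, hx2⟩
  have hii : ∀ b, B b = (univ.filter fun c => A c + B b = k + p).card := by
    intro b
    show (S.filter fun w => lcoord p d2 w = b).card = _
    apply Finset.card_bij (fun x _ => lcoord p d1 x)
    · intro x hx
      simp only [mem_filter] at hx ⊢
      refine ⟨mem_univ _, ?_⟩
      rw [← hx.2]
      exact (hmem x).1 hx.1
    · intro x hx y hy hxy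
      simp only [mem_filter] at hx hy
      exact joint_inj p hne hxy (hx.2.trans hy.2.symm)
    · intro c hc
      simp only [mem_filter] at hc
      obtain ⟨x, hx1, hx2⟩ := joint_surj p hne c b
      exact ⟨x, mem_filter.2 ⟨(hmem x).2 (by rw [hx1, hx2]; exact hc.2), hx2⟩, hx1⟩
  have hAle : ∀ c, A c ≤ p := fun c => by
    rw [← fiber_card p d1 c]
    exact card_le_card (filter_subset_filter _ (subset_univ S))
  have hstar : ∀ c, A c ≠ 0 → (univ.filter fun c' => A c' = A c).card + A c = k + p := by
    intro c hc
    have h1 := hi c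
    have hnon : (univ.filter fun b => A c + B b = k + p).Nonempty := by
      rw [← Finset.card_pos, ← h1]
      omega
    obtain ⟨b, hb⟩ := hnon
    simp only [mem_filter] at hb
    have h2 := hii b
    have heq : (univ.filter fun c' => A c' + B b = k + p)
        = (univ.filter fun c' => A c' = A c) := by
      refine Finset.filter_congr fun c' _ => ?_
      have := hb.2
      constructor <;> intro h <;> omega
    rw [heq] at h2
    omega
  have hcardu : (univ : Finset (ZMod p)).card = p := by rw [Finset.card_univ, ZMod.card]
  have huniq : ∀ c c', A c ≠ 0 → A c' ≠ 0 → A c = A c' := by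
    intro c c' hc hc'
    by_contra hdiff
    have h1 := hstar c hc
    have h2 := hstar c' hc'
    have hdisj : Disjoint (univ.filter fun x => A x = A c) (univ.filter fun x => A x = A c') := by
      rw [Finset.disjoint_left]
      intro x hx hx'
      simp only [mem_filter] at hx hx'
      exact hdiff (hx.2 ▸ hx'.2 ▸ rfl)
    have hcardsum : (univ.filter fun x => A x = A c).card
        + (univ.filter fun x => A x = A c').card ≤ p := by
      calc (univ.filter fun x => A x = A c).card + (univ.filter fun x => A x = A c').card
          = ((univ.filter fun x => A x = A c) ∪ (univ.filter fun x => A x = A c')).card :=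
            (Finset.card_union_of_disjoint hdisj).symm
        _ ≤ (univ : Finset (ZMod p)).card :=
            card_le_card (union_subset (filter_subset _ _) (filter_subset _ _))
        _ = p := hcardu
    have hsum2 : A c * (univ.filter fun x => A x = A c).card
        + A c' * (univ.filter fun x => A x = A c').card ≤ p * k := by
      have hle : ∑ x ∈ (univ.filter fun x => A x = A c) ∪ (univ.filter fun x => A x = A c'),
          A x ≤ ∑ x : ZMod p, A x :=
        Finset.sum_le_sum_of_subset (subset_univ _)
      rw [Finset.sum_union hdisj] at hle
      have e1 : ∑ x ∈ univ.filter (fun x => A x = A c), A x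
          = A c * (univ.filter fun x => A x = A c).card := by
        rw [Finset.sum_congr rfl (fun x hx => (mem_filter.1 hx).2), Finset.sum_const,
          smul_eq_mul, mul_comm]
      have e2 : ∑ x ∈ univ.filter (fun x => A x = A c'), A x
          = A c' * (univ.filter fun x => A x = A c').card := by
        rw [Finset.sum_congr rfl (fun x hx => (mem_filter.1 hx).2), Finset.sum_const,
          smul_eq_mul, mul_comm]
      rw [e1, e2] at hle
      calc A c * (univ.filter fun x => A x = A c).card
          + A c' * (univ.filter fun x => A x = A c').card ≤ ∑ x : ZMod p, A x := hle
        _ = p * k := by rw [hA]; rw [sum_fibers p S d1, hSk]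
    have hN1 : k ≤ (univ.filter fun x => A x = A c).card := by
      have := hAle c; omega
    have hN2 : k ≤ (univ.filter fun x => A x = A c').card := by
      have := hAle c'; omega
    have hb1 : A c * k ≤ A c * (univ.filter fun x => A x = A c).card :=
      Nat.mul_le_mul_left _ hN1
    have hb2 : A c' * k ≤ A c' * (univ.filter fun x => A x = A c').card :=
      Nat.mul_le_mul_left _ hN2
    have hkk : (A c + A c') * k ≤ p * k := by
      rw [add_mul]
      exact le_trans (add_le_add hb1 hb2) hsum2
    have hle2 : A c + A c' ≤ p :=
      Nat.le_of_mul_le_mul_right hkk (Nat.pos_of_ne_zero hkpos)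
    omega
  obtain ⟨c1, hc1⟩ : ∃ c, A c ≠ 0 := by
    by_contra hc
    push_neg at hc
    have hz : S.card = 0 := by
      rw [← sum_fibers p S d1]
      exact Finset.sum_eq_zero fun c _ => hc c
    rw [hSk] at hz
    rcases Nat.mul_eq_zero.1 hz with h | h
    · exact absurd h hp.pos.ne'
    · exact hkpos h
  obtain ⟨c0, hc0⟩ : ∃ c0, A c0 = 0 := by
    by_contra hc
    push_neg at hc
    exact hd1 (const_equi p S d1 fun b b' => huniq b b' (hc b) (hc b'))
  have h1 := hstar c1 hc1
  have hNle : (univ.filter fun x => A x = A c1).card ≤ p :=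
    le_trans (card_le_card (filter_subset _ _)) (le_of_eq hcardu)
  have hsumA : A c1 * (univ.filter fun x => A x = A c1).card = p * k := by
    have hdich0 : ∀ x, A x = A c1 ∨ A x = 0 := fun x => by
      by_cases h : A x = 0
      · right; exact h
      · left; exact huniq x c1 h hc1
    have := Finset.sum_filter_add_sum_filter_not univ (fun x => A x = A c1) A
    have e1 : ∑ x ∈ univ.filter (fun x => A x = A c1), A x
        = A c1 * (univ.filter fun x => A x = A c1).card := by
      rw [Finset.sum_congr rfl (fun x hx => (mem_filter.1 hx).2), Finset.sum_const,
        smul_eq_mul, mul_comm]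
    have e2 : ∑ x ∈ univ.filter (fun x => ¬ A x = A c1), A x = 0 :=
      Finset.sum_eq_zero fun x hx => by
        rcases hdich0 x with h | h
        · exact absurd h (mem_filter.1 hx).2
        · exact h
    have e3 : ∑ x : ZMod p, A x = p * k := by rw [hA]; rw [sum_fibers p S d1, hSk]
    rw [e1, e2, e3] at this
    omega
  have hak : A c1 ≠ k := by
    intro e
    have hNp : (univ.filter fun x => A x = A c1).card = p := by omega
    have : (univ.filter fun x => A x = A c1) = univ :=
      Finset.eq_of_subset_of_card_le (filter_subset _ _) (by rw [hNp, hcardu])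
    have hc0' : c0 ∈ univ.filter fun x => A x = A c1 := by rw [this]; exact mem_univ c0
    exact hc1 ((mem_filter.1 hc0').2 ▸ hc0)
  have hagt : k < A c1 := by omega
  have hap : A c1 = p := by
    have hz : ((A c1 : ℤ)) * ((k : ℤ) + p - A c1) = (p : ℤ) * k := by
      have hN : ((univ.filter fun x => A x = A c1).card : ℤ) = (k : ℤ) + p - A c1 := by
        have := h1; omega
      rw [← hN]
      exact_mod_cast hsumA
    have hfac : ((A c1 : ℤ) - k) * ((A c1 : ℤ) - p) = 0 := by ring_nf; linarith [hz]
    rcases mul_eq_zero.1 hfac with h | h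
    · exfalso
      have : (A c1 : ℤ) = k := by linarith
      exact absurd (by exact_mod_cast this) hak
    · have : (A c1 : ℤ) = p := by linarith
      exact_mod_cast this
  have hdich : ∀ c, A c = 0 ∨ A c = p := fun c => by
    by_cases h : A c = 0
    · left; exact h
    · right; rw [← hap]; exact huniq c c1 h hc1
  have hmem2 : ∀ x, x ∈ S ↔ A (lcoord p d1 x) = p := by
    intro x
    constructor
    · intro hx
      rcases hdich (lcoord p d1 x) with h | h
      · exfalso
        have hxin : x ∈ S.filter fun w => lcoord p d1 w = lcoord p d1 x :=
          mem_filter.2 ⟨hx, rfl⟩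
        have : (S.filter fun w => lcoord p d1 w = lcoord p d1 x).card = 0 := h
        rw [Finset.card_eq_zero] at this
        rw [this] at hxin
        exact absurd hxin (Finset.notMem_empty x)
      · exact h
    · intro h
      have hsub : (S.filter fun w => lcoord p d1 w = lcoord p d1 x)
          ⊆ univ.filter fun w => lcoord p d1 w = lcoord p d1 x :=
        filter_subset_filter _ (subset_univ S)
      have heq : (S.filter fun w => lcoord p d1 w = lcoord p d1 x)
          = univ.filter fun w => lcoord p d1 w = lcoord p d1 x :=
        Finset.eq_of_subset_of_card_le hsub (by
          rw [fiber_card]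
          exact le_of_eq h.symm)
      have hx : x ∈ univ.filter fun w => lcoord p d1 w = lcoord p d1 x :=
        mem_filter.2 ⟨mem_univ _, rfl⟩
      rw [← heq] at hx
      exact (mem_filter.1 hx).1
  refine hd2 (const_equi p S d2 ?_)
  suffices h : ∀ b, (S.filter fun w => lcoord p d2 w = b).card
      = (univ.filter fun c => A c = p).card by intro b b'; rw [h, h]
  intro b
  apply Finset.card_bij (fun x _ => lcoord p d1 x)
  · intro x hx
    simp only [mem_filter] at hx ⊢
    exact ⟨mem_univ _, (hmem2 x).1 hx.1⟩
  · intro x hx y hy hxy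
    simp only [mem_filter] at hx hy
    exact joint_inj p hne hxy (hx.2.trans hy.2.symm)
  · intro c hc
    simp only [mem_filter] at hc
    obtain ⟨x, hx1, hx2⟩ := joint_surj p hne c b
    exact ⟨x, mem_filter.2 ⟨(hmem2 x).2 (hx1 ▸ hc.2), hx2⟩, hx1⟩
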